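/- (Joint strictly dominates separate): If (2p1 − 1)/(4p1 − 1) < α1/α2 < (2p1 − 1)/(3p1 − 1) with 1/2 < p1 < 1 and 2α1 < α2, then the joint two-task policy achieves strictly smaller cost J_λ = λE[T] + (1 − λ)E[C] than the separate policy for every λ ∈ [0, 1]. -/
import Mathlib


/-- Joint strictly dominates separate: if
(2p1-1)/(4p1-1) < α1/α2 < (2p1-1)/(3p1-1), with 1/2 < p1 < 1 and 2α1 < α2,
then the joint two-task policy achieves strictly smaller cost
J_λ = λ E[T] + (1-λ) E[C] than the separate policy for every λ ∈ [0,1]. -/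
theorem stmt_15 (α1 α2 p1 : ℝ)
    (hα1 : 0 < α1) (hα : 2 * α1 < α2)
    (hp1 : 1 / 2 < p1) (hp1' : p1 < 1)
    (hlow : (2 * p1 - 1) / (4 * p1 - 1) < α1 / α2)
    (hhigh : α1 / α2 < (2 * p1 - 1) / (3 * p1 - 1))
    (ETs ECs ETd ECd : ℝ)
    (hETs : ETs = p1 ^ 2 * α1 + (1 - p1 ^ 2) * α2)
    (hECs : ECs = 2 * p1 ^ 2 * α1 + 2 * p1 * (1 - p1) * (α1 + α2)
                    + 2 * (1 - p1 ^ 2) * α2)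
    (hETd : ETd = p1 ^ 2 * α1 + 4 * p1 ^ 2 * (1 - p1) * α1
                    + (1 - p1) ^ 2 * (2 * p1 + 1) * α2)
    (hECd : ECd = 2 * p1 ^ 2 * α1 + 6 * p1 ^ 2 * (1 - p1) * α1
                    + 2 * (1 - p1) ^ 2 * (2 * p1 + 1) * α2) :
    ∀ lam : ℝ, 0 ≤ lam → lam ≤ 1 →
      lam * ETd + (1 - lam) * ECd < lam * ETs + (1 - lam) * ECs := by
  intro lam h0 h1
  have hT : ETd < ETs := by
    rw [hETs, hETd]
    nlinarith [mul_pos (mul_pos (pow_pos (by linarith : (0:ℝ) < p1) 2) (by linarith : (0:ℝ) < 1 - p1)) (by linarith : (0:ℝ) < α2 - 2 * α1)]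
  have hC : ECd < ECs := by
    rw [hECs, hECd]
    nlinarith [mul_pos (mul_pos (by linarith : (0:ℝ) < p1) (by linarith : (0:ℝ) < 1 - p1)) (by nlinarith : (0:ℝ) < α1 * (1 - 3 * p1) + α2 * (1 + 2 * p1))]
  nlinarith [mul_le_mul_of_nonneg_left hT.le h0, mul_le_mul_of_nonneg_left hC.le (by linarith : (0:ℝ) ≤ 1 - lam)]
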